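/- Let q be an even positive integer, m = m_1 + m_2, and let f, g : {0,1}^m × {0,1} → Z_q form a q-ary Golay array pair of size 2^(m+1). Write points of {0,1}^m as (x_1, x_2) with x_1 ∈ {0,1}^{m_1}, x_2 ∈ {0,1}^{m_2}. Suppose there exist q-ary arrays a, b : {0,1}^{m_1} → Z_q and c, d : {0,1}^{m_2} → Z_q such that for all (x_1, x_2): f(x_1,x_2,0) = a(x_1) + c(x_2), g(x_1,x_2,0) = b(x_1) + c(x_2), f(x_1,x_2,1) = −b*(x_1) + d(x_2), and g(x_1,x_2,1) = −a*(x_1) + q/2 + d(x_2), where a*(x_1) = a(1−x_1) and b*(x_1) = b(1−x_1) denote the reverse arrays. Then (a, b) is a Golay array pair of size 2^(m_1) and (c, d) is a Golay array pair of size 2^(m_2). -/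
import Mathlib


open scoped BigOperators

/-- ζ = exp(2πi/q). -/
noncomputable def zeta (q : ℕ) : ℂ := Complex.exp (2 * Real.pi * Complex.I / q)

/-- ζ^c for c ∈ Z_q (well defined since ζ^q = 1). -/
noncomputable def zetaPow (q : ℕ) (c : ZMod q) : ℂ := zeta q ^ c.val

/-- Aperiodic cross-correlation of arrays u, v at shift τ:
    C_{u,v}(τ) = Σ_{x, x+τ ∈ {0,1}^m} ζ^{u(x+τ) - v(x)}. -/
noncomputable def corr (q m : ℕ) (u v : (Fin m → Fin 2) → ZMod q) (τ : Fin m → ℤ) : ℂ :=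
  ∑ y : Fin m → Fin 2, ∑ x : Fin m → Fin 2,
    if ∀ i, ((y i : ℕ) : ℤ) - ((x i : ℕ) : ℤ) = τ i then zetaPow q (u y - v x) else 0

/-- (f, g) is a Golay array pair of size 2^(m). -/
def IsGAP (q m : ℕ) (f g : (Fin m → Fin 2) → ZMod q) : Prop :=
  ∀ τ : Fin m → ℤ, (∀ i, τ i = -1 ∨ τ i = 0 ∨ τ i = 1) → τ ≠ 0 →
    corr q m f f τ + corr q m g g τ = 0

/-- Generating function of an array, as a function on ℂ^m. -/
noncomputable def genFun (q m : ℕ) (f : (Fin m → Fin 2) → ZMod q) (z : Fin m → ℂ) : ℂ :=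
  ∑ x : Fin m → Fin 2, zetaPow q (f x) * ∏ i, (z i) ^ ((x i : ℕ))

/-- Coefficient-wise conjugate of the generating function, as a function on ℂ^m. -/
noncomputable def genFunConj (q m : ℕ) (f : (Fin m → Fin 2) → ZMod q) (z : Fin m → ℂ) : ℂ :=
  ∑ x : Fin m → Fin 2, (starRingEnd ℂ) (zetaPow q (f x)) * ∏ i, (z i) ^ ((x i : ℕ))

/-- Generating function of an array, as a multivariate polynomial. -/
noncomputable def genPoly (q m : ℕ) (f : (Fin m → Fin 2) → ZMod q) :
    MvPolynomial (Fin m) ℂ :=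
  ∑ x : Fin m → Fin 2, MvPolynomial.C (zetaPow q (f x)) * ∏ i, (MvPolynomial.X i) ^ ((x i : ℕ))

/-- Generating function of an array on a subset S of the coordinates. -/
noncomputable def genPolyOn (q m : ℕ) (S : Finset (Fin m)) (a : (↥S → Fin 2) → ZMod q) :
    MvPolynomial (Fin m) ℂ :=
  ∑ u : ↥S → Fin 2, MvPolynomial.C (zetaPow q (a u)) * ∏ k : ↥S, (MvPolynomial.X (k : Fin m)) ^ ((u k : ℕ))

/-- (f, g) is a standard Golay array pair of size 2^(m). -/
def IsStandard (q m : ℕ) (hm : 0 < m) (f g : (Fin m → Fin 2) → ZMod q) : Prop :=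
  ∃ π : Equiv.Perm (Fin m), ∃ c0 c' : ZMod q, ∃ c : Fin m → ZMod q,
    (∀ x : Fin m → Fin 2,
        f x = ((q / 2 : ℕ) : ZMod q) *
            (∑ k : Fin m, if h : (k : ℕ) + 1 < m then
                ((x (π k) : ℕ) : ZMod q) * ((x (π ⟨(k : ℕ) + 1, h⟩) : ℕ) : ZMod q) else 0)
          + (∑ k : Fin m, c k * ((x k : ℕ) : ZMod q)) + c0)
    ∧ (∀ x : Fin m → Fin 2,
        g x = f x + ((q / 2 : ℕ) : ZMod q) * ((x (π ⟨0, hm⟩) : ℕ) : ZMod q) + c')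

namespace GapAux

def glue (m₁ m₂ : ℕ) (x₁ : Fin m₁ → Fin 2) (x₂ : Fin m₂ → Fin 2) (u : Fin 2) :
    Fin (m₁ + m₂ + 1) → Fin 2 := fun k =>
  if h : (k : ℕ) < m₁ then x₁ ⟨k, h⟩
  else if h2 : (k : ℕ) < m₁ + m₂ then x₂ ⟨(k : ℕ) - m₁, by omega⟩
  else u

def pad (m₁ m₂ : ℕ) (τ₁ : Fin m₁ → ℤ) (τ₂ : Fin m₂ → ℤ) : Fin (m₁ + m₂ + 1) → ℤ := fun k =>
  if h : (k : ℕ) < m₁ then τ₁ ⟨k, h⟩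
  else if h2 : (k : ℕ) < m₁ + m₂ then τ₂ ⟨(k : ℕ) - m₁, by omega⟩
  else 0

variable {m₁ m₂ : ℕ}

lemma glue_left (x₁ : Fin m₁ → Fin 2) (x₂ : Fin m₂ → Fin 2) (u : Fin 2) (i : Fin m₁) :
    glue m₁ m₂ x₁ x₂ u (Fin.castLE (by omega) i) = x₁ i := by
  simp only [glue, Fin.coe_castLE, i.isLt, dif_pos, Fin.eta]

lemma glue_mid (x₁ : Fin m₁ → Fin 2) (x₂ : Fin m₂ → Fin 2) (u : Fin 2) (j : Fin m₂) :
    glue m₁ m₂ x₁ x₂ u (Fin.castLE (by omega) (Fin.natAdd m₁ j)) = x₂ j := by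
  have hj := j.isLt
  simp only [glue, Fin.coe_castLE, Fin.coe_natAdd]
  rw [dif_neg (by omega), dif_pos (by omega)]
  congr 1
  ext
  simp

lemma glue_last (x₁ : Fin m₁ → Fin 2) (x₂ : Fin m₂ → Fin 2) (u : Fin 2) :
    glue m₁ m₂ x₁ x₂ u (Fin.last (m₁ + m₂)) = u := by
  simp only [glue, Fin.val_last]
  rw [dif_neg (by omega), dif_neg (by omega)]

lemma pad_left (τ₁ : Fin m₁ → ℤ) (τ₂ : Fin m₂ → ℤ) (i : Fin m₁) :
    pad m₁ m₂ τ₁ τ₂ (Fin.castLE (by omega) i) = τ₁ i := by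
  simp only [pad, Fin.coe_castLE, i.isLt, dif_pos, Fin.eta]

lemma pad_mid (τ₁ : Fin m₁ → ℤ) (τ₂ : Fin m₂ → ℤ) (j : Fin m₂) :
    pad m₁ m₂ τ₁ τ₂ (Fin.castLE (by omega) (Fin.natAdd m₁ j)) = τ₂ j := by
  have hj := j.isLt
  simp only [pad, Fin.coe_castLE, Fin.coe_natAdd]
  rw [dif_neg (by omega), dif_pos (by omega)]
  congr 1
  ext
  simp

lemma pad_last (τ₁ : Fin m₁ → ℤ) (τ₂ : Fin m₂ → ℤ) :
    pad m₁ m₂ τ₁ τ₂ (Fin.last (m₁ + m₂)) = 0 := by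
  simp only [pad, Fin.val_last]
  rw [dif_neg (by omega), dif_neg (by omega)]

def glueEquiv (m₁ m₂ : ℕ) :
    ((Fin m₁ → Fin 2) × (Fin m₂ → Fin 2) × Fin 2) ≃ (Fin (m₁ + m₂ + 1) → Fin 2) where
  toFun p := glue m₁ m₂ p.1 p.2.1 p.2.2
  invFun x := (fun i => x (Fin.castLE (by omega) i),
               fun j => x (Fin.castLE (by omega) (Fin.natAdd m₁ j)),
               x (Fin.last (m₁ + m₂)))
  left_inv p := by
    obtain ⟨x₁, x₂, u⟩ := p
    refine Prod.ext ?_ (Prod.ext ?_ ?_) <;> simp [glue_left, glue_mid, glue_last]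
  right_inv x := by
    funext k
    by_cases h : (k : ℕ) < m₁
    · rw [show k = Fin.castLE (by omega) (⟨(k:ℕ), h⟩ : Fin m₁) from by ext; simp]
      exact glue_left _ _ _ _
    · by_cases h2 : (k : ℕ) < m₁ + m₂
      · rw [show k = Fin.castLE (by omega) (Fin.natAdd m₁ (⟨(k:ℕ) - m₁, by omega⟩ : Fin m₂)) from by ext; simp; omega]
        exact glue_mid _ _ _ _
      · rw [show k = Fin.last (m₁ + m₂) from by ext; simp; omega]
        exact glue_last _ _ _

end GapAux

namespace GapAux2
open GapAux

lemma cond_iff {m₁ m₂ : ℕ} (τ₁ : Fin m₁ → ℤ) (τ₂ : Fin m₂ → ℤ)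
    (y₁ x₁ : Fin m₁ → Fin 2) (y₂ x₂ : Fin m₂ → Fin 2) (u v : Fin 2) :
    (∀ k : Fin (m₁ + m₂ + 1),
        ((glue m₁ m₂ y₁ y₂ u k : ℕ) : ℤ) - ((glue m₁ m₂ x₁ x₂ v k : ℕ) : ℤ) = pad m₁ m₂ τ₁ τ₂ k)
    ↔ ((∀ i, ((y₁ i : ℕ) : ℤ) - ((x₁ i : ℕ) : ℤ) = τ₁ i)
        ∧ (∀ j, ((y₂ j : ℕ) : ℤ) - ((x₂ j : ℕ) : ℤ) = τ₂ j)) ∧ u = v := by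
  constructor
  · intro h
    refine ⟨⟨fun i => ?_, fun j => ?_⟩, ?_⟩
    · have := h (Fin.castLE (by omega) i)
      rwa [glue_left, glue_left, pad_left] at this
    · have := h (Fin.castLE (by omega) (Fin.natAdd m₁ j))
      rwa [glue_mid, glue_mid, pad_mid] at this
    · have := h (Fin.last (m₁ + m₂))
      rw [glue_last, glue_last, pad_last] at this
      ext
      omega
  · rintro ⟨⟨h1, h2⟩, rfl⟩ k
    by_cases hk : (k : ℕ) < m₁
    · simp only [glue, pad, dif_pos hk]
      exact h1 _
    · by_cases hk2 : (k : ℕ) < m₁ + m₂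
      · simp only [glue, pad, dif_neg hk, dif_pos hk2]
        exact h2 _
      · simp only [glue, pad, dif_neg hk, dif_neg hk2]
        ring

lemma corr_pad (q : ℕ) {m₁ m₂ : ℕ} (F G : (Fin (m₁ + m₂ + 1) → Fin 2) → ZMod q)
    (τ₁ : Fin m₁ → ℤ) (τ₂ : Fin m₂ → ℤ) :
    corr q (m₁ + m₂ + 1) F G (pad m₁ m₂ τ₁ τ₂) =
    ∑ y₁ : Fin m₁ → Fin 2, ∑ y₂ : Fin m₂ → Fin 2, ∑ u : Fin 2,
      ∑ x₁ : Fin m₁ → Fin 2, ∑ x₂ : Fin m₂ → Fin 2,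
        if (∀ i, ((y₁ i : ℕ) : ℤ) - ((x₁ i : ℕ) : ℤ) = τ₁ i)
            ∧ (∀ j, ((y₂ j : ℕ) : ℤ) - ((x₂ j : ℕ) : ℤ) = τ₂ j)
        then zetaPow q (F (glue m₁ m₂ y₁ y₂ u) - G (glue m₁ m₂ x₁ x₂ u)) else 0 := by
  rw [corr]
  rw [← Equiv.sum_comp (glueEquiv m₁ m₂) (fun y => ∑ x : Fin (m₁+m₂+1) → Fin 2,
      if ∀ i, ((y i : ℕ) : ℤ) - ((x i : ℕ) : ℤ) = pad m₁ m₂ τ₁ τ₂ i then zetaPow q (F y - G x) else 0)]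
  rw [Fintype.sum_prod_type]
  refine Finset.sum_congr rfl fun y₁ _ => ?_
  rw [Fintype.sum_prod_type]
  refine Finset.sum_congr rfl fun y₂ _ => ?_
  refine Finset.sum_congr rfl fun u _ => ?_
  rw [show (glueEquiv m₁ m₂) (y₁, y₂, u) = glue m₁ m₂ y₁ y₂ u from rfl]
  rw [← Equiv.sum_comp (glueEquiv m₁ m₂) (fun x => if ∀ i, ((glue m₁ m₂ y₁ y₂ u i : ℕ) : ℤ) - ((x i : ℕ) : ℤ) = pad m₁ m₂ τ₁ τ₂ i then zetaPow q (F (glue m₁ m₂ y₁ y₂ u) - G x) else 0)]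
  rw [Fintype.sum_prod_type]
  refine Finset.sum_congr rfl fun x₁ _ => ?_
  rw [Fintype.sum_prod_type]
  refine Finset.sum_congr rfl fun x₂ _ => ?_
  have key : ∀ v : Fin 2,
      (if ∀ k, ((glue m₁ m₂ y₁ y₂ u k : ℕ) : ℤ) - ((glue m₁ m₂ x₁ x₂ v k : ℕ) : ℤ) = pad m₁ m₂ τ₁ τ₂ k
        then zetaPow q (F (glue m₁ m₂ y₁ y₂ u) - G (glue m₁ m₂ x₁ x₂ v)) else 0)
      = if u = v then (if (∀ i, ((y₁ i : ℕ) : ℤ) - ((x₁ i : ℕ) : ℤ) = τ₁ i)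
            ∧ (∀ j, ((y₂ j : ℕ) : ℤ) - ((x₂ j : ℕ) : ℤ) = τ₂ j)
        then zetaPow q (F (glue m₁ m₂ y₁ y₂ u) - G (glue m₁ m₂ x₁ x₂ v)) else 0) else 0 := by
    intro v
    by_cases huv : u = v
    · by_cases hC : ((∀ i, ((y₁ i : ℕ) : ℤ) - ((x₁ i : ℕ) : ℤ) = τ₁ i)
          ∧ (∀ j, ((y₂ j : ℕ) : ℤ) - ((x₂ j : ℕ) : ℤ) = τ₂ j))
      · rw [if_pos ((cond_iff τ₁ τ₂ y₁ x₁ y₂ x₂ u v).mpr ⟨hC, huv⟩), if_pos huv, if_pos hC]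
      · rw [if_neg (fun hk => hC ((cond_iff τ₁ τ₂ y₁ x₁ y₂ x₂ u v).mp hk).1),
            if_pos huv, if_neg hC]
    · rw [if_neg (fun hk => huv ((cond_iff τ₁ τ₂ y₁ x₁ y₂ x₂ u v).mp hk).2), if_neg huv]
  calc (∑ v : Fin 2, if ∀ k, ((glue m₁ m₂ y₁ y₂ u k : ℕ) : ℤ) - ((glue m₁ m₂ x₁ x₂ v k : ℕ) : ℤ) = pad m₁ m₂ τ₁ τ₂ k
        then zetaPow q (F (glue m₁ m₂ y₁ y₂ u) - G (glue m₁ m₂ x₁ x₂ v)) else 0)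
      = ∑ v : Fin 2, if u = v then (if (∀ i, ((y₁ i : ℕ) : ℤ) - ((x₁ i : ℕ) : ℤ) = τ₁ i)
            ∧ (∀ j, ((y₂ j : ℕ) : ℤ) - ((x₂ j : ℕ) : ℤ) = τ₂ j)
        then zetaPow q (F (glue m₁ m₂ y₁ y₂ u) - G (glue m₁ m₂ x₁ x₂ v)) else 0) else 0 := by
        exact Finset.sum_congr rfl fun v _ => key v
    _ = _ := by rw [Finset.sum_ite_eq]; simp

end GapAux2

namespace GapAux3
open GapAux GapAux2

lemma fin2_sub_rev (s t : Fin 2) :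
    ((((1:Fin 2) - s : Fin 2) : ℕ) : ℤ) - ((((1:Fin 2) - t : Fin 2) : ℕ) : ℤ)
      = ((t : ℕ) : ℤ) - ((s : ℕ) : ℤ) := by revert s t; decide

lemma fin2_rev_rev (t : Fin 2) : (1:Fin 2) - (1 - t) = t := by revert t; decide

def revE (m : ℕ) : (Fin m → Fin 2) ≃ (Fin m → Fin 2) :=
  Function.Involutive.toPerm (fun x => fun i => 1 - x i)
    (fun x => by funext i; exact fin2_rev_rev (x i))

lemma rev_corr (q m : ℕ) (B : (Fin m → Fin 2) → ZMod q) (τ : Fin m → ℤ) :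
    (∑ y : Fin m → Fin 2, ∑ x : Fin m → Fin 2,
      if ∀ i, ((y i : ℕ) : ℤ) - ((x i : ℕ) : ℤ) = τ i
      then zetaPow q (B (fun i => 1 - x i) - B (fun i => 1 - y i)) else 0)
    = corr q m B B τ := by
  rw [Finset.sum_comm]
  rw [corr]
  rw [← Equiv.sum_comp (revE m) (fun Y : Fin m → Fin 2 => ∑ X : Fin m → Fin 2,
      if ∀ i, ((Y i : ℕ) : ℤ) - ((X i : ℕ) : ℤ) = τ i then zetaPow q (B Y - B X) else 0)]
  refine Finset.sum_congr rfl fun x _ => ?_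
  rw [← Equiv.sum_comp (revE m) (fun X : Fin m → Fin 2 =>
      if ∀ i, (((revE m x) i : ℕ) : ℤ) - ((X i : ℕ) : ℤ) = τ i
      then zetaPow q (B (revE m x) - B X) else 0)]
  refine Finset.sum_congr rfl fun y _ => ?_
  have h1 : revE m x = fun i => 1 - x i := rfl
  have h2 : revE m y = fun i => 1 - y i := rfl
  rw [h1, h2]
  refine if_congr (forall_congr' fun i => ?_) rfl rfl
  simp only []
  rw [fin2_sub_rev]

lemma fin2_sub_zero_iff (s t : Fin 2) :
    (((s : ℕ) : ℤ) - ((t : ℕ) : ℤ) = 0) ↔ s = t := by revert s t; decide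

lemma collapse (q m₂ : ℕ) {P : Prop} [Decidable P] (A : (Fin m₂ → Fin 2) → ℂ) (y₂ : Fin m₂ → Fin 2) :
    (∑ x₂ : Fin m₂ → Fin 2,
      if P ∧ (∀ j, ((y₂ j : ℕ) : ℤ) - ((x₂ j : ℕ) : ℤ) = (0:ℤ)) then A x₂ else 0)
    = if P then A y₂ else 0 := by
  have : ∀ x₂ : Fin m₂ → Fin 2,
      (if P ∧ (∀ j, ((y₂ j : ℕ) : ℤ) - ((x₂ j : ℕ) : ℤ) = (0:ℤ)) then A x₂ else 0)
      = if y₂ = x₂ then (if P then A x₂ else 0) else 0 := by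
    intro x₂
    have hiff : (∀ j, ((y₂ j : ℕ) : ℤ) - ((x₂ j : ℕ) : ℤ) = (0:ℤ)) ↔ y₂ = x₂ := by
      simp only [fin2_sub_zero_iff, funext_iff]
    by_cases he : y₂ = x₂
    · by_cases hP : P
      · rw [if_pos ⟨hP, hiff.mpr he⟩, if_pos he, if_pos hP]
      · rw [if_neg (fun h => hP h.1), if_pos he, if_neg hP]
    · rw [if_neg (fun h => he (hiff.mp h.2)), if_neg he]
  rw [Finset.sum_congr rfl fun x₂ _ => this x₂, Finset.sum_ite_eq]
  simp

end GapAux3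

namespace GapAux4
open GapAux GapAux2 GapAux3

lemma card_fun2 (m : ℕ) : (Fintype.card (Fin m → Fin 2)) = 2 ^ m := by
  simp

lemma corr_left (q m₁ m₂ : ℕ) (F : (Fin (m₁ + m₂ + 1) → Fin 2) → ZMod q)
    (A B : (Fin m₁ → Fin 2) → ZMod q)
    (hA : ∀ (y₁ x₁ : Fin m₁ → Fin 2) (y₂ : Fin m₂ → Fin 2),
      F (glue m₁ m₂ y₁ y₂ 0) - F (glue m₁ m₂ x₁ y₂ 0) = A y₁ - A x₁)
    (hB : ∀ (y₁ x₁ : Fin m₁ → Fin 2) (y₂ : Fin m₂ → Fin 2),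
      F (glue m₁ m₂ y₁ y₂ 1) - F (glue m₁ m₂ x₁ y₂ 1)
        = B (fun i => 1 - x₁ i) - B (fun i => 1 - y₁ i))
    (τ₁ : Fin m₁ → ℤ) :
    corr q (m₁ + m₂ + 1) F F (pad m₁ m₂ τ₁ (fun _ => 0)) =
      ((2 : ℂ) ^ m₂) * (corr q m₁ A A τ₁ + corr q m₁ B B τ₁) := by
  rw [corr_pad]
  have step : ∀ (y₁ : Fin m₁ → Fin 2) (y₂ : Fin m₂ → Fin 2) (u : Fin 2),
      (∑ x₁ : Fin m₁ → Fin 2, ∑ x₂ : Fin m₂ → Fin 2,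
        if (∀ i, ((y₁ i : ℕ) : ℤ) - ((x₁ i : ℕ) : ℤ) = τ₁ i)
            ∧ (∀ j, ((y₂ j : ℕ) : ℤ) - ((x₂ j : ℕ) : ℤ) = (fun _ => (0:ℤ)) j)
        then zetaPow q (F (glue m₁ m₂ y₁ y₂ u) - F (glue m₁ m₂ x₁ x₂ u)) else 0)
      = ∑ x₁ : Fin m₁ → Fin 2,
          if (∀ i, ((y₁ i : ℕ) : ℤ) - ((x₁ i : ℕ) : ℤ) = τ₁ i)
          then zetaPow q (F (glue m₁ m₂ y₁ y₂ u) - F (glue m₁ m₂ x₁ y₂ u)) else 0 := by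
    intro y₁ y₂ u
    refine Finset.sum_congr rfl fun x₁ _ => ?_
    exact collapse q m₂ (fun x₂ => zetaPow q (F (glue m₁ m₂ y₁ y₂ u) - F (glue m₁ m₂ x₁ x₂ u))) y₂
  calc (∑ y₁ : Fin m₁ → Fin 2, ∑ y₂ : Fin m₂ → Fin 2, ∑ u : Fin 2,
      ∑ x₁ : Fin m₁ → Fin 2, ∑ x₂ : Fin m₂ → Fin 2,
        if (∀ i, ((y₁ i : ℕ) : ℤ) - ((x₁ i : ℕ) : ℤ) = τ₁ i)
            ∧ (∀ j, ((y₂ j : ℕ) : ℤ) - ((x₂ j : ℕ) : ℤ) = (fun _ => (0:ℤ)) j)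
        then zetaPow q (F (glue m₁ m₂ y₁ y₂ u) - F (glue m₁ m₂ x₁ x₂ u)) else 0)
      = ∑ y₁ : Fin m₁ → Fin 2, ∑ _y₂ : Fin m₂ → Fin 2,
          ((∑ x₁ : Fin m₁ → Fin 2,
            if (∀ i, ((y₁ i : ℕ) : ℤ) - ((x₁ i : ℕ) : ℤ) = τ₁ i)
            then zetaPow q (A y₁ - A x₁) else 0)
          + ∑ x₁ : Fin m₁ → Fin 2,
            if (∀ i, ((y₁ i : ℕ) : ℤ) - ((x₁ i : ℕ) : ℤ) = τ₁ i)
            then zetaPow q (B (fun i => 1 - x₁ i) - B (fun i => 1 - y₁ i)) else 0) := by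
        refine Finset.sum_congr rfl fun y₁ _ => Finset.sum_congr rfl fun y₂ _ => ?_
        rw [Fin.sum_univ_two, step y₁ y₂ 0, step y₁ y₂ 1]
        congr 1
        · refine Finset.sum_congr rfl fun x₁ _ => ?_
          rw [hA y₁ x₁ y₂]
        · refine Finset.sum_congr rfl fun x₁ _ => ?_
          rw [hB y₁ x₁ y₂]
    _ = ∑ y₁ : Fin m₁ → Fin 2, ((2 : ℂ) ^ m₂) *
          ((∑ x₁ : Fin m₁ → Fin 2,
            if (∀ i, ((y₁ i : ℕ) : ℤ) - ((x₁ i : ℕ) : ℤ) = τ₁ i)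
            then zetaPow q (A y₁ - A x₁) else 0)
          + ∑ x₁ : Fin m₁ → Fin 2,
            if (∀ i, ((y₁ i : ℕ) : ℤ) - ((x₁ i : ℕ) : ℤ) = τ₁ i)
            then zetaPow q (B (fun i => 1 - x₁ i) - B (fun i => 1 - y₁ i)) else 0) := by
        refine Finset.sum_congr rfl fun y₁ _ => ?_
        rw [Finset.sum_const, Finset.card_univ, card_fun2, nsmul_eq_mul]
        push_cast
        ring
    _ = ((2 : ℂ) ^ m₂) * (corr q m₁ A A τ₁ + corr q m₁ B B τ₁) := by
        rw [← Finset.mul_sum, Finset.sum_add_distrib]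
        rw [rev_corr]
        rw [corr, corr]

lemma collapse' (q m₁ : ℕ) {P : Prop} [Decidable P] (A : (Fin m₁ → Fin 2) → ℂ)
    (y₁ : Fin m₁ → Fin 2) :
    (∑ x₁ : Fin m₁ → Fin 2,
      if (∀ i, ((y₁ i : ℕ) : ℤ) - ((x₁ i : ℕ) : ℤ) = (0:ℤ)) ∧ P then A x₁ else 0)
    = if P then A y₁ else 0 := by
  have : ∀ x₁ : Fin m₁ → Fin 2,
      (if (∀ i, ((y₁ i : ℕ) : ℤ) - ((x₁ i : ℕ) : ℤ) = (0:ℤ)) ∧ P then A x₁ else 0)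
      = if y₁ = x₁ then (if P then A x₁ else 0) else 0 := by
    intro x₁
    have hiff : (∀ i, ((y₁ i : ℕ) : ℤ) - ((x₁ i : ℕ) : ℤ) = (0:ℤ)) ↔ y₁ = x₁ := by
      simp only [fin2_sub_zero_iff, funext_iff]
    by_cases he : y₁ = x₁
    · by_cases hP : P
      · rw [if_pos ⟨hiff.mpr he, hP⟩, if_pos he, if_pos hP]
      · rw [if_neg (fun h => hP h.2), if_pos he, if_neg hP]
    · rw [if_neg (fun h => he (hiff.mp h.1)), if_neg he]
  rw [Finset.sum_congr rfl fun x₁ _ => this x₁, Finset.sum_ite_eq]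
  simp

lemma corr_right (q m₁ m₂ : ℕ) (F : (Fin (m₁ + m₂ + 1) → Fin 2) → ZMod q)
    (Cc D : (Fin m₂ → Fin 2) → ZMod q)
    (hC : ∀ (y₁ : Fin m₁ → Fin 2) (y₂ x₂ : Fin m₂ → Fin 2),
      F (glue m₁ m₂ y₁ y₂ 0) - F (glue m₁ m₂ y₁ x₂ 0) = Cc y₂ - Cc x₂)
    (hD : ∀ (y₁ : Fin m₁ → Fin 2) (y₂ x₂ : Fin m₂ → Fin 2),
      F (glue m₁ m₂ y₁ y₂ 1) - F (glue m₁ m₂ y₁ x₂ 1) = D y₂ - D x₂)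
    (τ₂ : Fin m₂ → ℤ) :
    corr q (m₁ + m₂ + 1) F F (pad m₁ m₂ (fun _ => 0) τ₂) =
      ((2 : ℂ) ^ m₁) * (corr q m₂ Cc Cc τ₂ + corr q m₂ D D τ₂) := by
  rw [corr_pad]
  have step : ∀ (y₁ : Fin m₁ → Fin 2) (y₂ : Fin m₂ → Fin 2) (u : Fin 2),
      (∑ x₁ : Fin m₁ → Fin 2, ∑ x₂ : Fin m₂ → Fin 2,
        if (∀ i, ((y₁ i : ℕ) : ℤ) - ((x₁ i : ℕ) : ℤ) = (fun _ => (0:ℤ)) i)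
            ∧ (∀ j, ((y₂ j : ℕ) : ℤ) - ((x₂ j : ℕ) : ℤ) = τ₂ j)
        then zetaPow q (F (glue m₁ m₂ y₁ y₂ u) - F (glue m₁ m₂ x₁ x₂ u)) else 0)
      = ∑ x₂ : Fin m₂ → Fin 2,
          if (∀ j, ((y₂ j : ℕ) : ℤ) - ((x₂ j : ℕ) : ℤ) = τ₂ j)
          then zetaPow q (F (glue m₁ m₂ y₁ y₂ u) - F (glue m₁ m₂ y₁ x₂ u)) else 0 := by
    intro y₁ y₂ u
    rw [Finset.sum_comm]
    refine Finset.sum_congr rfl fun x₂ _ => ?_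
    exact collapse' q m₁ (fun x₁ => zetaPow q (F (glue m₁ m₂ y₁ y₂ u) - F (glue m₁ m₂ x₁ x₂ u))) y₁
  calc (∑ y₁ : Fin m₁ → Fin 2, ∑ y₂ : Fin m₂ → Fin 2, ∑ u : Fin 2,
      ∑ x₁ : Fin m₁ → Fin 2, ∑ x₂ : Fin m₂ → Fin 2,
        if (∀ i, ((y₁ i : ℕ) : ℤ) - ((x₁ i : ℕ) : ℤ) = (fun _ => (0:ℤ)) i)
            ∧ (∀ j, ((y₂ j : ℕ) : ℤ) - ((x₂ j : ℕ) : ℤ) = τ₂ j)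
        then zetaPow q (F (glue m₁ m₂ y₁ y₂ u) - F (glue m₁ m₂ x₁ x₂ u)) else 0)
      = ∑ _y₁ : Fin m₁ → Fin 2, ∑ y₂ : Fin m₂ → Fin 2,
          ((∑ x₂ : Fin m₂ → Fin 2,
            if (∀ j, ((y₂ j : ℕ) : ℤ) - ((x₂ j : ℕ) : ℤ) = τ₂ j)
            then zetaPow q (Cc y₂ - Cc x₂) else 0)
          + ∑ x₂ : Fin m₂ → Fin 2,
            if (∀ j, ((y₂ j : ℕ) : ℤ) - ((x₂ j : ℕ) : ℤ) = τ₂ j)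
            then zetaPow q (D y₂ - D x₂) else 0) := by
        refine Finset.sum_congr rfl fun y₁ _ => Finset.sum_congr rfl fun y₂ _ => ?_
        rw [Fin.sum_univ_two, step y₁ y₂ 0, step y₁ y₂ 1]
        congr 1
        · refine Finset.sum_congr rfl fun x₂ _ => ?_
          rw [hC y₁ y₂ x₂]
        · refine Finset.sum_congr rfl fun x₂ _ => ?_
          rw [hD y₁ y₂ x₂]
    _ = ((2 : ℂ) ^ m₁) * (corr q m₂ Cc Cc τ₂ + corr q m₂ D D τ₂) := by
        rw [Finset.sum_const, Finset.card_univ, card_fun2, nsmul_eq_mul]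
        rw [Finset.sum_add_distrib]
        push_cast
        rw [corr, corr]

end GapAux4


-- value lemmas
section Vals
variable {q m₁ m₂ : ℕ}
variable (f g : (Fin (m₁ + m₂ + 1) → Fin 2) → ZMod q)
variable (a b : (Fin m₁ → Fin 2) → ZMod q) (c d : (Fin m₂ → Fin 2) → ZMod q)

lemma lambda_left (y₁ : Fin m₁ → Fin 2) (y₂ : Fin m₂ → Fin 2) (u : Fin 2) :
    (fun i => GapAux.glue m₁ m₂ y₁ y₂ u (Fin.castLE (by omega) i)) = y₁ :=
  funext fun i => GapAux.glue_left y₁ y₂ u i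

lemma lambda_mid (y₁ : Fin m₁ → Fin 2) (y₂ : Fin m₂ → Fin 2) (u : Fin 2) :
    (fun j => GapAux.glue m₁ m₂ y₁ y₂ u (Fin.castLE (by omega) (Fin.natAdd m₁ j))) = y₂ :=
  funext fun j => GapAux.glue_mid y₁ y₂ u j

lemma lambda_left' (y₁ : Fin m₁ → Fin 2) (y₂ : Fin m₂ → Fin 2) (u : Fin 2) :
    (fun i => (1:Fin 2) - GapAux.glue m₁ m₂ y₁ y₂ u (Fin.castLE (by omega) i)) = fun i => 1 - y₁ i :=
  funext fun i => by rw [GapAux.glue_left y₁ y₂ u i]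

end Vals


open GapAux GapAux2 GapAux3 GapAux4 in
/-- if a GAP (f,g) of size 2^(m₁+m₂+1) decomposes as
    f(x₁,x₂,0)=a(x₁)+c(x₂), g(x₁,x₂,0)=b(x₁)+c(x₂),
    f(x₁,x₂,1)=−b*(x₁)+d(x₂), g(x₁,x₂,1)=−a*(x₁)+q/2+d(x₂),
    then (a,b) and (c,d) are Golay array pairs. -/
theorem gap_decompose (q m₁ m₂ : ℕ) (hq : 0 < q) (hqe : Even q)
    (f g : (Fin (m₁ + m₂ + 1) → Fin 2) → ZMod q)
    (hGAP : IsGAP q (m₁ + m₂ + 1) f g)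
    (a b : (Fin m₁ → Fin 2) → ZMod q) (c d : (Fin m₂ → Fin 2) → ZMod q)
    (h0 : ∀ x : Fin (m₁ + m₂ + 1) → Fin 2, x (Fin.last (m₁ + m₂)) = 0 →
      f x = a (fun i => x (Fin.castLE (by omega) i)) + c (fun j => x (Fin.castLE (by omega) (Fin.natAdd m₁ j))) ∧
      g x = b (fun i => x (Fin.castLE (by omega) i)) + c (fun j => x (Fin.castLE (by omega) (Fin.natAdd m₁ j))))
    (h1 : ∀ x : Fin (m₁ + m₂ + 1) → Fin 2, x (Fin.last (m₁ + m₂)) = 1 →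
      f x = -(b (fun i => 1 - x (Fin.castLE (by omega) i))) + d (fun j => x (Fin.castLE (by omega) (Fin.natAdd m₁ j))) ∧
      g x = -(a (fun i => 1 - x (Fin.castLE (by omega) i))) + ((q / 2 : ℕ) : ZMod q) + d (fun j => x (Fin.castLE (by omega) (Fin.natAdd m₁ j)))) :
    IsGAP q m₁ a b ∧ IsGAP q m₂ c d := by 
  -- values of f and g on glued points
  have hf0 : ∀ (y₁ : Fin m₁ → Fin 2) (y₂ : Fin m₂ → Fin 2),
      f (glue m₁ m₂ y₁ y₂ 0) = a y₁ + c y₂ := by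
    intro y₁ y₂
    have := (h0 (glue m₁ m₂ y₁ y₂ 0) (glue_last y₁ y₂ 0)).1
    rwa [lambda_left, lambda_mid] at this
  have hg0 : ∀ (y₁ : Fin m₁ → Fin 2) (y₂ : Fin m₂ → Fin 2),
      g (glue m₁ m₂ y₁ y₂ 0) = b y₁ + c y₂ := by
    intro y₁ y₂
    have := (h0 (glue m₁ m₂ y₁ y₂ 0) (glue_last y₁ y₂ 0)).2
    rwa [lambda_left, lambda_mid] at this
  have hf1 : ∀ (y₁ : Fin m₁ → Fin 2) (y₂ : Fin m₂ → Fin 2),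
      f (glue m₁ m₂ y₁ y₂ 1) = -(b (fun i => 1 - y₁ i)) + d y₂ := by
    intro y₁ y₂
    have := (h1 (glue m₁ m₂ y₁ y₂ 1) (glue_last y₁ y₂ 1)).1
    rwa [lambda_left', lambda_mid] at this
  have hg1 : ∀ (y₁ : Fin m₁ → Fin 2) (y₂ : Fin m₂ → Fin 2),
      g (glue m₁ m₂ y₁ y₂ 1) = -(a (fun i => 1 - y₁ i)) + ((q / 2 : ℕ) : ZMod q) + d y₂ := by
    intro y₁ y₂
    have := (h1 (glue m₁ m₂ y₁ y₂ 1) (glue_last y₁ y₂ 1)).2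
    rwa [lambda_left', lambda_mid] at this
  have h2pow : ∀ n : ℕ, ((2:ℂ) ^ n * 2) ≠ 0 := by
    intro n; exact mul_ne_zero (pow_ne_zero _ two_ne_zero) two_ne_zero
  constructor
  · intro τ₁ hτ hne
    set T : Fin (m₁ + m₂ + 1) → ℤ := pad m₁ m₂ τ₁ (fun _ => 0) with hT
    have hT1 : ∀ k, T k = -1 ∨ T k = 0 ∨ T k = 1 := by
      intro k
      rw [hT]
      unfold pad
      split_ifs with h h2
      · exact hτ _
      · right; left; rfl
      · right; left; rfl
    have hT2 : T ≠ 0 := by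
      obtain ⟨i, hi⟩ : ∃ i, τ₁ i ≠ 0 := by
        by_contra h; push_neg at h; exact hne (funext h)
      intro h
      apply hi
      have := congrFun h (Fin.castLE (by omega) i)
      rwa [hT, pad_left] at this
    have key := hGAP T hT1 hT2
    rw [hT, corr_left q m₁ m₂ f a b
        (fun y₁ x₁ y₂ => by rw [hf0, hf0]; ring)
        (fun y₁ x₁ y₂ => by rw [hf1, hf1]; ring) τ₁,
      corr_left q m₁ m₂ g b a
        (fun y₁ x₁ y₂ => by rw [hg0, hg0]; ring)
        (fun y₁ x₁ y₂ => by rw [hg1, hg1]; ring) τ₁] at key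
    have h3 : ((2:ℂ) ^ m₂ * 2) * (corr q m₁ a a τ₁ + corr q m₁ b b τ₁) = 0 := by
      linear_combination key
    exact (mul_eq_zero.mp h3).resolve_left (h2pow m₂)
  · intro τ₂ hτ hne
    set T : Fin (m₁ + m₂ + 1) → ℤ := pad m₁ m₂ (fun _ => 0) τ₂ with hT
    have hT1 : ∀ k, T k = -1 ∨ T k = 0 ∨ T k = 1 := by
      intro k
      rw [hT]
      unfold pad
      split_ifs with h h2
      · right; left; rfl
      · exact hτ _
      · right; left; rfl
    have hT2 : T ≠ 0 := by
      obtain ⟨j, hj⟩ : ∃ j, τ₂ j ≠ 0 := by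
        by_contra h; push_neg at h; exact hne (funext h)
      intro h
      apply hj
      have := congrFun h (Fin.castLE (by omega) (Fin.natAdd m₁ j))
      rwa [hT, pad_mid] at this
    have key := hGAP T hT1 hT2
    rw [hT, corr_right q m₁ m₂ f c d
        (fun y₁ y₂ x₂ => by rw [hf0, hf0]; ring)
        (fun y₁ y₂ x₂ => by rw [hf1, hf1]; ring) τ₂,
      corr_right q m₁ m₂ g c d
        (fun y₁ y₂ x₂ => by rw [hg0, hg0]; ring)
        (fun y₁ y₂ x₂ => by rw [hg1, hg1]; ring) τ₂] at key
    have h3 : ((2:ℂ) ^ m₁ * 2) * (corr q m₂ c c τ₂ + corr q m₂ d d τ₂) = 0 := by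
      linear_combination key
    exact (mul_eq_zero.mp h3).resolve_left (h2pow m₁)
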